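/- Let h : Σ → Σ* be a morphism and h̄ : (Σ × A) → (Σ × A)* an annotation of h. Then every eigenvalue of the incidence matrix of h̄ that has a non-negative (entrywise ≥ 0, nonzero) eigenvector is also an eigenvalue of the incidence matrix of h. -/

import Mathlib

/-- The incidence matrix (over ℝ) of a morphism `h`. -/
def incMatR {S : Type*} [DecidableEq S] (h : S → List S) : Matrix S S ℝ :=
  Matrix.of fun i j => ((h j).count i : ℝ)

lemma count_fst_aux {S A : Type*} [Fintype A] [DecidableEq S] [DecidableEq A]
    (l : List (S × A)) (b' : S) :
    ∑ a' : A, (l.count (b', a') : ℝ) = ((l.map Prod.fst).count b' : ℝ) := by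
  induction l with
  | nil => simp
  | cons x t ih =>
    simp only [List.count_cons, List.map_cons]
    push_cast
    rw [Finset.sum_add_distrib, ih]
    congr 1
    rcases x with ⟨x1, x2⟩
    simp only [beq_iff_eq, Prod.mk.injEq]
    by_cases hx : x1 = b'
    · subst hx
      simp
    · simp [hx]

/-- Every eigenvalue of the incidence matrix of an annotation `hb` of `h` that has a
non-negative (entrywise ≥ 0, nonzero) eigenvector is also an eigenvalue of the
incidence matrix of `h`. -/
theorem stmt2 {S A : Type*} [Fintype S] [Fintype A] [DecidableEq S] [DecidableEq A]
    (h : S → List S) (hb : S × A → List (S × A))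
    (hann : ∀ (b : S) (a : A), (hb (b, a)).map Prod.fst = h b)
    (r : ℝ) (v : S × A → ℝ) (hv : v ≠ 0) (hnonneg : ∀ p, 0 ≤ v p)
    (heig : (incMatR hb).mulVec v = r • v) :
    ∃ w : S → ℝ, w ≠ 0 ∧ (incMatR h).mulVec w = r • w := by
  refine ⟨fun b => ∑ a : A, v (b, a), ?_, ?_⟩
  · obtain ⟨p, hp⟩ := Function.ne_iff.mp hv
    have hp' : 0 < v p := lt_of_le_of_ne (hnonneg p) (fun e => hp e.symm)
    intro hw
    have := congrFun hw p.1
    simp only [Pi.zero_apply] at this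
    have hle : v p ≤ ∑ a : A, v (p.1, a) := by
      have := Finset.single_le_sum (f := fun a => v (p.1, a))
        (fun a _ => hnonneg _) (Finset.mem_univ p.2)
      simpa using this
    linarith
  · funext b'
    have key : ∀ b a, ((h b).count b' : ℝ) = ∑ a' : A, ((hb (b, a)).count (b', a') : ℝ) := by
      intro b a
      rw [count_fst_aux, hann]
    simp only [incMatR, Matrix.mulVec, Matrix.of_apply, dotProduct, Pi.smul_apply,
      smul_eq_mul]
    calc ∑ b : S, ((h b).count b' : ℝ) * ∑ a : A, v (b, a)
        = ∑ b : S, ∑ a : A, ((h b).count b' : ℝ) * v (b, a) := by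
          simp [Finset.mul_sum]
      _ = ∑ b : S, ∑ a : A, ∑ a' : A, ((hb (b, a)).count (b', a') : ℝ) * v (b, a) := by
          refine Finset.sum_congr rfl fun b _ => Finset.sum_congr rfl fun a _ => ?_
          rw [key b a, Finset.sum_mul]
      _ = ∑ a' : A, ∑ b : S, ∑ a : A, ((hb (b, a)).count (b', a') : ℝ) * v (b, a) := by
          rw [show (∑ b : S, ∑ a : A, ∑ a' : A, ((hb (b, a)).count (b', a') : ℝ) * v (b, a))
              = ∑ b : S, ∑ a' : A, ∑ a : A, ((hb (b, a)).count (b', a') : ℝ) * v (b, a)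
            from Finset.sum_congr rfl fun b _ => Finset.sum_comm]
          exact Finset.sum_comm
      _ = ∑ a' : A, r * v (b', a') := by
          refine Finset.sum_congr rfl fun a' _ => ?_
          have hBEq : (instBEqProd : BEq (S × A)) = instBEqOfDecidableEq := by
            refine congrArg BEq.mk (funext fun x => funext fun y => ?_)
            rw [Bool.eq_iff_iff]
            simp [instBEqProd, Prod.ext_iff]
          have := congrFun heig (b', a')
          simp only [incMatR, Matrix.mulVec, Matrix.of_apply, dotProduct, Pi.smul_apply,
            smul_eq_mul, Fintype.sum_prod_type] at this
          rw [hBEq]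
          exact this
      _ = r * ∑ a : A, v (b', a) := by rw [Finset.mul_sum]
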